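/- The function φ = 1/2 + (x³-3x²-9x+315)·y/(108(3x-5)²), defined on the elliptic curve y² = x³+6x²+180x-900, satisfies 4·φ·(1-φ) = -(x³+45x-450)³/(2916(3x-5)⁴) whenever 3x-5 ≠ 0. -/

import Mathlib

/-- On the elliptic curve `y² = x³+6x²+180x-900`, the function
`φ = 1/2 + (x³-3x²-9x+315)·y/(108(3x-5)²)` satisfies
`4·φ·(1-φ) = -(x³+45x-450)³/(2916(3x-5)⁴)` whenever `3x-5 ≠ 0`. -/
theorem stmt_2 (x y : ℂ) (hE : y ^ 2 = x ^ 3 + 6 * x ^ 2 + 180 * x - 900)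
    (hx : 3 * x - 5 ≠ 0) :
    (4 : ℂ) * (1 / 2 + (x ^ 3 - 3 * x ^ 2 - 9 * x + 315) * y / (108 * (3 * x - 5) ^ 2)) *
        (1 - (1 / 2 + (x ^ 3 - 3 * x ^ 2 - 9 * x + 315) * y / (108 * (3 * x - 5) ^ 2))) =
      -((x ^ 3 + 45 * x - 450) ^ 3 / (2916 * (3 * x - 5) ^ 4)) := by
  have h : (108 : ℂ) * (3 * x - 5) ^ 2 ≠ 0 := by simp [hx]
  have key : (4 : ℂ) * (1 / 2 + (x ^ 3 - 3 * x ^ 2 - 9 * x + 315) * y / (108 * (3 * x - 5) ^ 2)) *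
      (1 - (1 / 2 + (x ^ 3 - 3 * x ^ 2 - 9 * x + 315) * y / (108 * (3 * x - 5) ^ 2))) =
      1 - (x ^ 3 - 3 * x ^ 2 - 9 * x + 315) ^ 2 * y ^ 2 / (2916 * (3 * x - 5) ^ 4) := by
    generalize 3 * x - 5 = s at *
    field_simp
    ring
  rw [key, hE]
  generalize hs : 3 * x - 5 = s at *
  field_simp
  rw [← hs]
  ring
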